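/- Let C be a braided monoidal category containing a symmetric monoidal subcategory A, with A-enriched category C-underline defined by Hom_A(a, C-underline(c,c')) ≅ Hom_C(a⊗c, c'). Define a tensor product on C-underline by, for mates f̄₁ : a₁⊗c₁ → c₁' and f̄₂ : a₂⊗c₂ → c₂', setting f₁ ⊗ f₂ to be the mate of (f̄₁ ⊗ f̄₂) ∘ (id_{a₁} ⊗ β_{a₂,c₁} ⊗ id_{c₂}). Then this assignment satisfies the interchange law: (f₁' ⊗ f₂') ∘ (f₁ ⊗ f₂) = (f₁' ∘ f₁) ⊗ (f₂' ∘ f₂), where composition of f : c →_a c' and f' : c' →_{a'} c'' has mate f̄' ∘ (id_{a'} ⊗ f̄). -/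

import Mathlib

open CategoryTheory MonoidalCategory

section

variable {C : Type*} [Category C] [MonoidalCategory C] [BraidedCategory C]

/-- The mate of the tensor product `f₁ ⊗ f₂` of two degree-graded morphisms, defined as
`(f̄₁ ⊗ f̄₂) ∘ (id_{a₁} ⊗ β_{a₂,c₁} ⊗ id_{c₂})` (with associators inserted). -/
def mateTensor {a₁ a₂ c₁ c₂ c₁' c₂' : C} (f₁ : a₁ ⊗ c₁ ⟶ c₁') (f₂ : a₂ ⊗ c₂ ⟶ c₂') :
    (a₁ ⊗ a₂) ⊗ (c₁ ⊗ c₂) ⟶ c₁' ⊗ c₂' :=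
  (α_ a₁ a₂ (c₁ ⊗ c₂)).hom ≫ (a₁ ◁ (α_ a₂ c₁ c₂).inv) ≫
    (a₁ ◁ ((β_ a₂ c₁).hom ▷ c₂)) ≫ (a₁ ◁ (α_ c₁ a₂ c₂).hom) ≫
      (α_ a₁ c₁ (a₂ ⊗ c₂)).inv ≫ (f₁ ⊗ₘ f₂)

/-- The mate of the composition of two degree-graded morphisms, `f̄' ∘ (id_{a'} ⊗ f̄)`. -/
def mateComp {a a' c c' c'' : C} (f : a ⊗ c ⟶ c') (f' : a' ⊗ c' ⟶ c'') :
    (a' ⊗ a) ⊗ c ⟶ c'' :=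
  (α_ a' a c).hom ≫ (a' ◁ f) ≫ f'


private lemma mateTensor_eq {a₁ a₂ c₁ c₂ c₁' c₂' : C} (f₁ : a₁ ⊗ c₁ ⟶ c₁')
    (f₂ : a₂ ⊗ c₂ ⟶ c₂') :
    mateTensor f₁ f₂ = tensorμ a₁ a₂ c₁ c₂ ≫ (f₁ ⊗ₘ f₂) := by
  simp [mateTensor, tensorμ]

/-- In a braided monoidal category `C` containing a symmetric subcategory `A`
(a class of objects closed under tensor and containing the unit, with trivial double braiding
among themselves), the tensor product of degree-graded morphisms defined on mates by
`(f̄₁ ⊗ f̄₂) ∘ (id ⊗ β_{a₂,c₁} ⊗ id)` satisfies the interchange law with respect to the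
composition `f̄' ∘ (id_{a'} ⊗ f̄)`: composing in the `A`-product and then tensoring agrees with
tensoring and then composing, where the degrees are rearranged by the symmetry of `A`
(the middle-four interchange `tensorμ`). -/
theorem mate_tensor_interchange
    (A : Set C) (hunit : 𝟙_ C ∈ A) (htens : ∀ a a' : C, a ∈ A → a' ∈ A → a ⊗ a' ∈ A)
    (hsym : ∀ a ∈ A, ∀ a' ∈ A, (β_ a a').hom ≫ (β_ a' a).hom = 𝟙 (a ⊗ a'))
    {a₁ a₂ a₁' a₂' c₁ c₂ c₁' c₂' c₁'' c₂'' : C}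
    (ha₁ : a₁ ∈ A) (ha₂ : a₂ ∈ A) (ha₁' : a₁' ∈ A) (ha₂' : a₂' ∈ A)
    (f₁ : a₁ ⊗ c₁ ⟶ c₁') (f₂ : a₂ ⊗ c₂ ⟶ c₂')
    (f₁' : a₁' ⊗ c₁' ⟶ c₁'') (f₂' : a₂' ⊗ c₂' ⟶ c₂'') :
    mateComp (mateTensor f₁ f₂) (mateTensor f₁' f₂') =
      (tensorμ a₁' a₂' a₁ a₂ ▷ (c₁ ⊗ c₂)) ≫
        mateTensor (mateComp f₁ f₁') (mateComp f₂ f₂') := by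
  simp only [mateTensor_eq, mateComp, MonoidalCategory.whiskerLeft_comp, Category.assoc,
    tensorμ_natural_right_assoc]
  conv_rhs => rw [← tensorHom_comp_tensorHom, tensor_associativity_assoc]
  rw [tensorHom_comp_tensorHom]

end
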